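/- arXiv:0804.4085 — 8 statements merged into one kernel-verified Lean document; each statement's English description precedes it below -/
import Mathlib

section
/- For all y, z, w in V one has g(Q(y,z),w) = −(1/4)[F(y,z,Jw) + F(z,w,Jy) + F(w,y,Jz)]. -/
theorem stmt0
    (V : Type*) [AddCommGroup V] [Module ℝ V] [FiniteDimensional ℝ V]
    (g : V →ₗ[ℝ] V →ₗ[ℝ] ℝ)
    (hgsymm : ∀ x y : V, g x y = g y x)
    (hgnd : ∀ x : V, (∀ y : V, g x y = 0) → x = 0)
    (J : V →ₗ[ℝ] V)
    (hJ2 : ∀ x : V, J (J x) = -x)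
    (hJg : ∀ x y : V, g (J x) (J y) = -(g x y))
    (N : V →ₗ[ℝ] V →ₗ[ℝ] V)
    (F : V → V → V → ℝ)
    (hF : ∀ x y z : V, F x y z = g (N x y) z)
    (hFsym : ∀ x y z : V, F x y z = F x z y)
    (hFJ : ∀ x y z : V, F x y z = F x (J y) (J z))
    (hQK : ∀ x y z : V, F x y z + F y z x + F z x y = 0)
    (Q : V → V → V)
    (hQ : ∀ x y : V, Q x y = (1/4 : ℝ) • (N x (J y) - N (J x) y - (2 : ℝ) • N y (J x)))
    :
    ∀ y z w : V, g (Q y z) w = -(1/4 : ℝ) * (F y z (J w) + F z w (J y) + F w y (J z)) := by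
  intro y z w
  have e1 : F y (J z) w = - F y z (J w) := by
    rw [hFJ y (J z) w, hJ2 z]
    simp [hF]
  have e2 : F w z (J y) = - F w y (J z) := by
    rw [hFJ w z (J y), hJ2 y, hFsym w (J z) (-y)]
    simp [hF, hFsym]
  have e3 := hQK (J y) z w
  have e4 : F w (J y) z = F w z (J y) := hFsym w (J y) z
  have e5 : F z (J y) w = F z w (J y) := hFsym z (J y) w
  have expand : g (Q y z) w
      = (1/4 : ℝ) * (F y (J z) w - F (J y) z w - 2 * F z (J y) w) := by
    rw [hQ]
    simp [hF, map_sub, map_smul, smul_eq_mul]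

  rw [expand]
  have e2' : F w (J y) z = - F w y (J z) := by rw [e4, e2]
  linarith [e3, e1, e2', e5, e2]
end

section
/- The trilinear form (y,z,w) ↦ g(Q(y,z),w) is totally skew-symmetric, i.e., it changes sign under the interchange of any two of its arguments. -/
theorem stmt1
    (V : Type*) [AddCommGroup V] [Module ℝ V] [FiniteDimensional ℝ V]
    (g : V →ₗ[ℝ] V →ₗ[ℝ] ℝ)
    (hgsymm : ∀ x y : V, g x y = g y x)
    (hgnd : ∀ x : V, (∀ y : V, g x y = 0) → x = 0)
    (J : V →ₗ[ℝ] V)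
    (hJ2 : ∀ x : V, J (J x) = -x)
    (hJg : ∀ x y : V, g (J x) (J y) = -(g x y))
    (N : V →ₗ[ℝ] V →ₗ[ℝ] V)
    (F : V → V → V → ℝ)
    (hF : ∀ x y z : V, F x y z = g (N x y) z)
    (hFsym : ∀ x y z : V, F x y z = F x z y)
    (hFJ : ∀ x y z : V, F x y z = F x (J y) (J z))
    (hQK : ∀ x y z : V, F x y z + F y z x + F z x y = 0)
    (Q : V → V → V)
    (hQ : ∀ x y : V, Q x y = (1/4 : ℝ) • (N x (J y) - N (J x) y - (2 : ℝ) • N y (J x)))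
    :
    ∀ y z w : V,
      g (Q y z) w = -(g (Q z y) w) ∧
      g (Q y z) w = -(g (Q y w) z) ∧
      g (Q y z) w = -(g (Q w z) y) := by
  have hneg : ∀ x y z : V, F x (J y) z = - F x y (J z) := by
    intro x y z
    have h := hFJ x (J y) z
    rw [hJ2] at h
    rw [h, hF, hF]
    simp
  have hG : ∀ x y z : V, g (Q x y) z
      = (1/4) * (F x (J y) z - F (J x) y z - 2 * F y (J x) z) := by
    intro x y z
    rw [hQ, hF, hF, hF]
    simp [smul_eq_mul]
  have h12 : ∀ y z w : V, g (Q y z) w = -(g (Q z y) w) := by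
    intro y z w
    rw [hG, hG]
    have c1 := hQK y (J z) w
    have c2 := hQK (J y) z w
    have s1 := hFsym (J z) w y
    have s2 := hFsym z w (J y)
    have n1 := hneg w y z
    linarith
  have h23 : ∀ y z w : V, g (Q y z) w = -(g (Q y w) z) := by
    intro y z w
    rw [hG, hG]
    have c1 := hQK (J y) z w
    have s1 := hFsym z w (J y)
    have s2 := hFsym (J y) w z
    have s3 := hFsym y (J w) z
    have n1 := hneg y z w
    linarith
  intro y z w
  refine ⟨h12 y z w, h23 y z w, ?_⟩
  rw [h23 y z w, h12 y w z, h23 w y z]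
  ring
end

section
/- For every z in V one has Σ_{i,j} g^{ij} F(e_i,e_j,z) = 0 and Σ_{i,j} g^{ij} F(e_i,Je_j,z) = 0, and consequently Σ_{i,j} g^{ij} Q(e_i,e_j) = 0 in V. -/
theorem stmt2
    (V : Type*) [AddCommGroup V] [Module ℝ V] [FiniteDimensional ℝ V]
    (g : V →ₗ[ℝ] V →ₗ[ℝ] ℝ)
    (hgsymm : ∀ x y : V, g x y = g y x)
    (hgnd : ∀ x : V, (∀ y : V, g x y = 0) → x = 0)
    (J : V →ₗ[ℝ] V)
    (hJ2 : ∀ x : V, J (J x) = -x)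
    (hJg : ∀ x y : V, g (J x) (J y) = -(g x y))
    (N : V →ₗ[ℝ] V →ₗ[ℝ] V)
    (F : V → V → V → ℝ)
    (hF : ∀ x y z : V, F x y z = g (N x y) z)
    (hFsym : ∀ x y z : V, F x y z = F x z y)
    (hFJ : ∀ x y z : V, F x y z = F x (J y) (J z))
    (hQK : ∀ x y z : V, F x y z + F y z x + F z x y = 0)
    (Q : V → V → V)
    (hQ : ∀ x y : V, Q x y = (1/4 : ℝ) • (N x (J y) - N (J x) y - (2 : ℝ) • N y (J x)))
    {ι : Type*} [Fintype ι] [DecidableEq ι]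
    (e : Module.Basis ι ℝ V)
    (ginv : ι → ι → ℝ)
    (hginv : ∀ i j : ι, (∑ k, ginv i k * g (e k) (e j)) = if i = j then (1:ℝ) else 0)
    :
    ∀ z : V,
      (∑ i, ∑ j, ginv i j * F (e i) (e j) z) = 0 ∧
      (∑ i, ∑ j, ginv i j * F (e i) (J (e j)) z) = 0 ∧
      (∑ i, ∑ j, ginv i j • Q (e i) (e j)) = (0 : V) := by
  -- pointwise versions of the structural hypotheses for G x y z := g (N x y) z
  have hGsym : ∀ x y z : V, g (N x y) z = g (N x z) y := fun x y z => by
    rw [← hF, hFsym, hF]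
  have hGJ : ∀ x y z : V, g (N x y) z = g (N x (J y)) (J z) := fun x y z => by
    rw [← hF, hFJ, hF]
  have hGQK : ∀ x y z : V, g (N x y) z + g (N y z) x + g (N z x) y = 0 := fun x y z => by
    rw [← hF, ← hF, ← hF]; exact hQK x y z
  -- the raised basis
  set v : ι → V := fun i => ∑ j, ginv i j • e j with hvdef
  have hv : ∀ i j, g (v i) (e j) = if i = j then (1:ℝ) else 0 := by
    intro i j
    simp only [hvdef, map_sum, map_smul, LinearMap.sum_apply, LinearMap.smul_apply,
      smul_eq_mul]
    exact hginv i j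
  have hv' : ∀ i j, g (e j) (v i) = if i = j then (1:ℝ) else 0 := fun i j => by
    rw [hgsymm]; exact hv i j
  -- symmetry of ginv
  have hvv : ∀ i j, g (v i) (v j) = ginv j i := by
    intro i j
    rw [show v j = ∑ k, ginv j k • e k from rfl, map_sum]
    simp only [map_smul, smul_eq_mul]
    calc (∑ k, ginv j k * g (v i) (e k)) = ∑ k, ginv j k * if i = k then (1:ℝ) else 0 := by
          refine Finset.sum_congr rfl fun k _ => by rw [hv]
      _ = ginv j i := by simp
  have hsym : ∀ i j, ginv i j = ginv j i := by
    intro i j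
    have := (hvv j i).symm.trans ((hgsymm (v j) (v i)).trans (hvv i j))
    exact this
  -- expansion of any vector in the raised basis
  have hexp : ∀ x : V, x = ∑ l, g x (e l) • v l := by
    intro x
    have hz : ∀ j, g (x - ∑ l, g x (e l) • v l) (e j) = 0 := by
      intro j
      simp only [map_sub, map_sum, map_smul, LinearMap.sum_apply, LinearMap.smul_apply,
        smul_eq_mul, LinearMap.sub_apply]
      have : (∑ l, g x (e l) * g (v l) (e j)) = g x (e j) := by
        calc (∑ l, g x (e l) * g (v l) (e j))
            = ∑ l, g x (e l) * if l = j then (1:ℝ) else 0 := by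
              refine Finset.sum_congr rfl fun l _ => by rw [hv]
          _ = g x (e j) := by simp
      rw [this]; ring
    have hz' : ∀ y, g (x - ∑ l, g x (e l) • v l) y = 0 := by
      intro y
      have hy := Module.Basis.sum_repr e y
      rw [← hy, map_sum]
      refine Finset.sum_eq_zero fun j _ => ?_
      rw [map_smul, hz j, smul_zero]
    have := hgnd _ hz'
    have h := sub_eq_zero.mp this
    exact h
  -- key anti-trace lemma
  have hkey : ∀ B : V →ₗ[ℝ] V →ₗ[ℝ] ℝ,
      (∑ i, B (J (e i)) (J (v i))) = -∑ i, B (e i) (v i) := by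
    set A : ι → ι → ℝ := fun k i => e.repr (J (e i)) k with hAdef
    set Bm : ι → ι → ℝ := fun l i => g (J (v i)) (e l) with hBdef
    have hJe : ∀ i, J (e i) = ∑ k, A k i • e k := fun i => (Module.Basis.sum_repr e (J (e i))).symm
    have hJv : ∀ i, J (v i) = ∑ l, Bm l i • v l := by
      intro i
      have := hexp (J (v i))
      simpa [hBdef] using this
    have h1 : ∀ i j, (∑ k, A k i * Bm k j) = -(if i = j then (1:ℝ) else 0) := by
      intro i j
      have hc : g (J (e i)) (J (v j)) = ∑ k, A k i * Bm k j := by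
        rw [hJe i, map_sum, LinearMap.sum_apply]
        refine Finset.sum_congr rfl fun k _ => ?_
        rw [map_smul, LinearMap.smul_apply, smul_eq_mul, hgsymm]
      have hd : g (J (e i)) (J (v j)) = -(if i = j then (1:ℝ) else 0) := by
        rw [hJg, hv' j i]
        by_cases h : i = j
        · subst h; simp
        · simp [h, Ne.symm h]
      rw [← hc, hd]
    have h2 : ∀ k l, (∑ i, A k i * Bm l i) = -(if k = l then (1:ℝ) else 0) := by
      have hM : (Matrix.of fun i k => -(A k i)) * (Matrix.of fun k j => Bm k j) = 1 := by
        ext i j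
        simp only [Matrix.mul_apply, Matrix.of_apply, Matrix.one_apply, neg_mul]
        rw [Finset.sum_neg_distrib, h1 i j, neg_neg]
      have hM2 := mul_eq_one_comm.mp hM
      intro k l
      have h := congrFun (congrFun hM2 l) k
      simp only [Matrix.mul_apply, Matrix.of_apply, Matrix.one_apply, mul_neg] at h
      have h' : -(∑ i, Bm l i * A k i) = if l = k then (1:ℝ) else 0 := by
        rw [← Finset.sum_neg_distrib]; exact h
      have : (∑ i, A k i * Bm l i) = ∑ i, Bm l i * A k i := by
        exact Finset.sum_congr rfl fun i _ => mul_comm _ _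
      rw [this]
      have hif : (if l = k then (1:ℝ) else 0) = if k = l then (1:ℝ) else 0 := by
        simp [eq_comm]
      rw [← hif]
      linarith [h']
    intro B
    calc (∑ i, B (J (e i)) (J (v i)))
        = ∑ i, ∑ k, ∑ l, A k i * (Bm l i * B (e k) (v l)) := by
          refine Finset.sum_congr rfl fun i _ => ?_
          rw [hJe i, hJv i]
          simp only [map_sum, map_smul, LinearMap.sum_apply, LinearMap.smul_apply,
            smul_eq_mul, Finset.mul_sum]
          rw [Finset.sum_comm]
          refine Finset.sum_congr rfl fun k _ => Finset.sum_congr rfl fun l _ => by ring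
      _ = ∑ k, ∑ l, (∑ i, A k i * Bm l i) * B (e k) (v l) := by
          rw [Finset.sum_comm]
          refine Finset.sum_congr rfl fun k _ => ?_
          rw [Finset.sum_comm]
          refine Finset.sum_congr rfl fun l _ => ?_
          rw [Finset.sum_mul]
          exact Finset.sum_congr rfl fun i _ => by ring
      _ = ∑ k, ∑ l, (-(if k = l then (1:ℝ) else 0)) * B (e k) (v l) := by
          refine Finset.sum_congr rfl fun k _ => Finset.sum_congr rfl fun l _ => by rw [h2]
      _ = -∑ i, B (e i) (v i) := by
          simp [neg_mul, ite_mul, Finset.sum_ite_eq]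
  -- S(z) = 0 : trace over last two slots
  have S0 : ∀ z : V, (∑ i, g (N z (e i)) (v i)) = 0 := by
    intro z
    have h := hkey (g.comp (N z))
    simp only [LinearMap.comp_apply] at h
    have e1 : (∑ i, g (N z (e i)) (v i)) = ∑ i, g (N z (J (e i))) (J (v i)) :=
      Finset.sum_congr rfl fun i _ => hGJ z (e i) (v i)
    rw [← e1] at h
    linarith
  -- expansion helpers
  have expv1 : ∀ (x z : V) (i : ι), g (N (v i) x) z = ∑ j, ginv i j * g (N (e j) x) z := by
    intro x z i
    rw [show v i = ∑ j, ginv i j • e j from rfl]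
    simp [map_sum, map_smul, LinearMap.sum_apply, LinearMap.smul_apply, smul_eq_mul]
  have expv2 : ∀ (x z : V) (i : ι), g (N x (v i)) z = ∑ j, ginv i j * g (N x (e j)) z := by
    intro x z i
    rw [show v i = ∑ j, ginv i j • e j from rfl]
    simp [map_sum, map_smul, LinearMap.sum_apply, LinearMap.smul_apply, smul_eq_mul]
  have expv3 : ∀ (x y : V) (i : ι), g (N x y) (v i) = ∑ j, ginv i j * g (N x y) (e j) := by
    intro x y i
    rw [show v i = ∑ j, ginv i j • e j from rfl]
    simp [map_sum, map_smul, smul_eq_mul]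
  have expv4 : ∀ (x z : V) (i : ι), g (N x (J (v i))) z = ∑ j, ginv i j * g (N x (J (e j))) z := by
    intro x z i
    rw [show v i = ∑ j, ginv i j • e j from rfl]
    simp [map_sum, map_smul, LinearMap.sum_apply, LinearMap.smul_apply, smul_eq_mul]
  have expv5 : ∀ (x z : V) (i : ι), g (N (J (v i)) x) z = ∑ j, ginv i j * g (N (J (e j)) x) z := by
    intro x z i
    rw [show v i = ∑ j, ginv i j • e j from rfl]
    simp [map_sum, map_smul, LinearMap.sum_apply, LinearMap.smul_apply, smul_eq_mul]
  -- T(z) = 0 : trace over first two slots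
  have T0 : ∀ z : V, (∑ i, g (N (e i) (v i)) z) = 0 := by
    intro z
    have hsumcyc : (∑ i, (g (N (e i) (v i)) z + g (N (v i) z) (e i) + g (N z (e i)) (v i))) = 0 :=
      Finset.sum_eq_zero fun i _ => hGQK (e i) (v i) z
    rw [Finset.sum_add_distrib, Finset.sum_add_distrib, S0 z] at hsumcyc
    have ht2 : (∑ i, g (N (v i) z) (e i)) = ∑ i, g (N (e i) (v i)) z := by
      calc (∑ i, g (N (v i) z) (e i))
          = ∑ i, g (N (v i) (e i)) z := Finset.sum_congr rfl fun i _ => hGsym (v i) z (e i)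
        _ = ∑ i, ∑ j, ginv i j * g (N (e j) (e i)) z :=
            Finset.sum_congr rfl fun i _ => expv1 (e i) z i
        _ = ∑ i, ∑ j, ginv i j * g (N (e i) (e j)) z := by
            rw [Finset.sum_comm]
            exact Finset.sum_congr rfl fun a _ => Finset.sum_congr rfl fun b _ => by
              rw [hsym b a]
        _ = ∑ i, g (N (e i) (v i)) z :=
            Finset.sum_congr rfl fun i _ => (expv2 (e i) z i).symm
    rw [ht2] at hsumcyc
    linarith
  -- U'(z) = 0
  have U'0 : ∀ z : V, (∑ i, g (N (J (e i)) (v i)) z) = 0 := by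
    intro z
    have h := hkey (N.compr₂ (g.flip (J z)))
    simp only [LinearMap.compr₂_apply, LinearMap.flip_apply] at h
    have e1 : (∑ i, g (N (J (e i)) (v i)) z) = ∑ i, g (N (J (e i)) (J (v i))) (J z) :=
      Finset.sum_congr rfl fun i _ => hGJ (J (e i)) (v i) z
    rw [e1, h, T0 (J z), neg_zero]
  -- S''(z) = 0
  have S''0 : ∀ z : V, (∑ i, g (N z (J (e i))) (v i)) = 0 := by
    intro z
    have hpt : ∀ i j : ι, g (N z (J (e i))) (e j) = -(g (N z (J (e j))) (e i)) := by
      intro i j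
      rw [hGsym z (J (e i)) (e j), hGJ z (e j) (J (e i)), hJ2, map_neg]
    have e1 : (∑ i, g (N z (J (e i))) (v i)) = ∑ i, ∑ j, ginv i j * g (N z (J (e i))) (e j) :=
      Finset.sum_congr rfl fun i _ => expv3 z (J (e i)) i
    have e2 : (∑ i, ∑ j, ginv i j * g (N z (J (e i))) (e j))
        = -∑ i, ∑ j, ginv i j * g (N z (J (e i))) (e j) := by
      calc (∑ i, ∑ j, ginv i j * g (N z (J (e i))) (e j))
          = ∑ i, ∑ j, ginv i j * -(g (N z (J (e j))) (e i)) :=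
            Finset.sum_congr rfl fun i _ => Finset.sum_congr rfl fun j _ => by rw [hpt i j]
        _ = -∑ i, ∑ j, ginv i j * g (N z (J (e j))) (e i) := by
            simp [mul_neg, Finset.sum_neg_distrib]
        _ = -∑ i, ∑ j, ginv i j * g (N z (J (e i))) (e j) := by
            congr 1
            rw [Finset.sum_comm]
            exact Finset.sum_congr rfl fun a _ => Finset.sum_congr rfl fun b _ => by
              rw [hsym b a]
    rw [e1]
    linarith [e2]
  -- U(z) = 0
  have U0 : ∀ z : V, (∑ i, g (N (e i) (J (v i))) z) = 0 := by
    intro z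
    have hsumcyc : (∑ i, (g (N (e i) (J (v i))) z + g (N (J (v i)) z) (e i)
        + g (N z (e i)) (J (v i)))) = 0 :=
      Finset.sum_eq_zero fun i _ => hGQK (e i) (J (v i)) z
    rw [Finset.sum_add_distrib, Finset.sum_add_distrib] at hsumcyc
    have ht2 : (∑ i, g (N (J (v i)) z) (e i)) = 0 := by
      calc (∑ i, g (N (J (v i)) z) (e i))
          = ∑ i, g (N (J (v i)) (e i)) z := Finset.sum_congr rfl fun i _ => hGsym (J (v i)) z (e i)
        _ = ∑ i, ∑ j, ginv i j * g (N (J (e j)) (e i)) z :=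
            Finset.sum_congr rfl fun i _ => expv5 (e i) z i
        _ = ∑ i, ∑ j, ginv i j * g (N (J (e i)) (e j)) z := by
            rw [Finset.sum_comm]
            exact Finset.sum_congr rfl fun a _ => Finset.sum_congr rfl fun b _ => by
              rw [hsym b a]
        _ = ∑ i, g (N (J (e i)) (v i)) z :=
            Finset.sum_congr rfl fun i _ => (expv2 (J (e i)) z i).symm
        _ = 0 := U'0 z
    have ht3 : (∑ i, g (N z (e i)) (J (v i))) = 0 := by
      calc (∑ i, g (N z (e i)) (J (v i)))
          = ∑ i, -(g (N z (J (e i))) (v i)) := by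
            refine Finset.sum_congr rfl fun i _ => ?_
            rw [hGJ z (e i) (J (v i)), hJ2, map_neg]
        _ = -∑ i, g (N z (J (e i))) (v i) := by rw [Finset.sum_neg_distrib]
        _ = 0 := by rw [S''0 z, neg_zero]
    rw [ht2, ht3] at hsumcyc
    linarith
  -- final assembly
  intro z
  refine ⟨?_, ?_, ?_⟩
  · simp only [hF]
    calc (∑ i, ∑ j, ginv i j * g (N (e i) (e j)) z)
        = ∑ i, g (N (e i) (v i)) z := Finset.sum_congr rfl fun i _ => (expv2 (e i) z i).symm
      _ = 0 := T0 z
  · simp only [hF]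
    calc (∑ i, ∑ j, ginv i j * g (N (e i) (J (e j))) z)
        = ∑ i, g (N (e i) (J (v i))) z := Finset.sum_congr rfl fun i _ => (expv4 (e i) z i).symm
      _ = 0 := U0 z
  · refine hgnd _ fun y => ?_
    have hD1 : (∑ i, ∑ j, ginv i j * g (N (e i) (J (e j))) y) = 0 := by
      calc (∑ i, ∑ j, ginv i j * g (N (e i) (J (e j))) y)
          = ∑ i, g (N (e i) (J (v i))) y := Finset.sum_congr rfl fun i _ => (expv4 (e i) y i).symm
        _ = 0 := U0 y
    have hD2 : (∑ i, ∑ j, ginv i j * g (N (J (e i)) (e j)) y) = 0 := by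
      calc (∑ i, ∑ j, ginv i j * g (N (J (e i)) (e j)) y)
          = ∑ i, g (N (J (e i)) (v i)) y :=
            Finset.sum_congr rfl fun i _ => (expv2 (J (e i)) y i).symm
        _ = 0 := U'0 y
    have hD3 : (∑ i, ∑ j, ginv i j * g (N (e j) (J (e i))) y) = 0 := by
      calc (∑ i, ∑ j, ginv i j * g (N (e j) (J (e i))) y)
          = ∑ i, ∑ j, ginv i j * g (N (e i) (J (e j))) y := by
            rw [Finset.sum_comm]
            exact Finset.sum_congr rfl fun a _ => Finset.sum_congr rfl fun b _ => by
              rw [hsym b a]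
        _ = 0 := hD1
    have hexpand : g (∑ i, ∑ j, ginv i j • Q (e i) (e j)) y
        = ∑ i, ∑ j, ginv i j * g (Q (e i) (e j)) y := by
      simp [map_sum, map_smul, LinearMap.sum_apply, LinearMap.smul_apply, smul_eq_mul]
    rw [hexpand]
    have hterm : ∀ i j : ι, ginv i j * g (Q (e i) (e j)) y
        = (1/4 : ℝ) * (ginv i j * g (N (e i) (J (e j))) y)
          - (1/4 : ℝ) * (ginv i j * g (N (J (e i)) (e j)) y)
          - (1/2 : ℝ) * (ginv i j * g (N (e j) (J (e i))) y) := by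
      intro i j
      rw [hQ]
      simp only [map_smul, map_sub, LinearMap.smul_apply, LinearMap.sub_apply, smul_eq_mul]
      ring
    calc (∑ i, ∑ j, ginv i j * g (Q (e i) (e j)) y)
        = ∑ i, ∑ j, ((1/4 : ℝ) * (ginv i j * g (N (e i) (J (e j))) y)
          - (1/4 : ℝ) * (ginv i j * g (N (J (e i)) (e j)) y)
          - (1/2 : ℝ) * (ginv i j * g (N (e j) (J (e i))) y)) :=
          Finset.sum_congr rfl fun i _ => Finset.sum_congr rfl fun j _ => hterm i j
      _ = (1/4 : ℝ) * (∑ i, ∑ j, ginv i j * g (N (e i) (J (e j))) y)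
          - (1/4 : ℝ) * (∑ i, ∑ j, ginv i j * g (N (J (e i)) (e j)) y)
          - (1/2 : ℝ) * (∑ i, ∑ j, ginv i j * g (N (e j) (J (e i))) y) := by
          simp [Finset.sum_sub_distrib, Finset.mul_sum]
      _ = 0 := by rw [hD1, hD2, hD3]; ring
end

section
/- One has ‖∇J‖² = −2 Σ g^{ij} g^{ks} g(N(e_i,e_k), N(e_s,e_j)), where the sum is over all indices i,j,k,s. -/
theorem stmt3
    (V : Type*) [AddCommGroup V] [Module ℝ V] [FiniteDimensional ℝ V]
    (g : V →ₗ[ℝ] V →ₗ[ℝ] ℝ)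
    (hgsymm : ∀ x y : V, g x y = g y x)
    (hgnd : ∀ x : V, (∀ y : V, g x y = 0) → x = 0)
    (J : V →ₗ[ℝ] V)
    (hJ2 : ∀ x : V, J (J x) = -x)
    (hJg : ∀ x y : V, g (J x) (J y) = -(g x y))
    (N : V →ₗ[ℝ] V →ₗ[ℝ] V)
    (F : V → V → V → ℝ)
    (hF : ∀ x y z : V, F x y z = g (N x y) z)
    (hFsym : ∀ x y z : V, F x y z = F x z y)
    (hFJ : ∀ x y z : V, F x y z = F x (J y) (J z))
    (hQK : ∀ x y z : V, F x y z + F y z x + F z x y = 0)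
    {ι : Type*} [Fintype ι] [DecidableEq ι]
    (e : Module.Basis ι ℝ V)
    (ginv : ι → ι → ℝ)
    (hginv : ∀ i j : ι, (∑ k, ginv i k * g (e k) (e j)) = if i = j then (1:ℝ) else 0)
    :
    (∑ i, ∑ j, ∑ k, ∑ s, ginv i j * ginv k s * g (N (e i) (e k)) (N (e j) (e s)))
      = -2 * ∑ i, ∑ j, ∑ k, ∑ s, ginv i j * ginv k s * g (N (e i) (e k)) (N (e s) (e j)) := by
  classical
  obtain ⟨d, hd⟩ : ∃ d : ι → V, ∀ i, d i = ∑ j, ginv i j • e j := ⟨_, fun _ => rfl⟩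
  -- contraction with ginv recovers coordinates
  have hcontr : ∀ (v : V) (c : ι), (∑ j, ginv c j * g (e j) v) = e.repr v c := by
    intro v c
    conv_lhs => rw [← e.sum_repr v]
    have h1 : ∀ j : ι, g (e j) (∑ a, e.repr v a • e a) = ∑ a, e.repr v a * g (e j) (e a) := by
      intro j; simp [smul_eq_mul, -Module.Basis.sum_repr]
    simp only [h1, Finset.mul_sum]
    rw [Finset.sum_comm]
    have h2 : ∀ a : ι, (∑ j, ginv c j * (e.repr v a * g (e j) (e a)))
        = (if c = a then (1:ℝ) else 0) * e.repr v a := by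
      intro a
      rw [← hginv c a, Finset.sum_mul]
      exact Finset.sum_congr rfl fun j _ => by ring
    simp only [h2]
    simp
  have hgd : ∀ (v : V) (c : ι), g v (d c) = e.repr v c := by
    intro v c
    rw [hd]
    rw [← hcontr v c]
    simp only [map_sum, map_smul, smul_eq_mul]
    exact Finset.sum_congr rfl fun j _ => by rw [hgsymm]
  -- pairing expansion
  have hpair : ∀ u v : V, g u v = ∑ c, g u (e c) * g v (d c) := by
    intro u v
    simp only [hgd]
    conv_lhs => rw [← e.sum_repr v]
    simp [smul_eq_mul, mul_comm, -Module.Basis.sum_repr]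
  -- collapsing the ginv-contractions into d
  have hcollapse : ∀ (u : V) (x y : ι),
      (∑ j, ∑ s, ginv x j * ginv y s * g u (N (e j) (e s))) = g u (N (d x) (d y)) := by
    intro u x y
    rw [hd, hd]
    simp only [map_sum, map_smul, LinearMap.sum_apply, LinearMap.smul_apply, smul_eq_mul,
      Finset.mul_sum]
    rw [Finset.sum_comm]
    exact Finset.sum_congr rfl fun a _ => Finset.sum_congr rfl fun b _ => by ring
  -- vector-level symmetry and cyclic identities
  have hsymV : ∀ x y z : V, g (N x y) z = g (N x z) y := by
    intro x y z; rw [← hF, ← hF, hFsym]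
  have hcycV : ∀ x y z : V, g (N x y) z + g (N y z) x + g (N z x) y = 0 := by
    intro x y z; rw [← hF, ← hF, ← hF]; exact hQK x y z
  have hB3 : ∀ a b c : ι, g (N (d a) (d b)) (d c)
      = -(g (N (d b) (d a)) (d c)) - g (N (d c) (d b)) (d a) := by
    intro a b c
    have h := hcycV (d a) (d b) (d c)
    have h1 : g (N (d b) (d c)) (d a) = g (N (d b) (d a)) (d c) := hsymV _ _ _
    have h2 : g (N (d c) (d a)) (d b) = g (N (d c) (d b)) (d a) := hsymV _ _ _
    linarith
  -- reduce LHS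
  have hL : (∑ i, ∑ j, ∑ k, ∑ s, ginv i j * ginv k s * g (N (e i) (e k)) (N (e j) (e s)))
      = ∑ i, ∑ k, ∑ c, g (N (e i) (e k)) (e c) * g (N (d i) (d k)) (d c) := by
    have step1 : (∑ i, ∑ j, ∑ k, ∑ s, ginv i j * ginv k s * g (N (e i) (e k)) (N (e j) (e s)))
        = ∑ i, ∑ k, ∑ j, ∑ s, ginv i j * ginv k s * g (N (e i) (e k)) (N (e j) (e s)) :=
      Finset.sum_congr rfl fun i _ => Finset.sum_comm
    rw [step1]
    refine Finset.sum_congr rfl fun i _ => Finset.sum_congr rfl fun k _ => ?_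
    rw [hcollapse (N (e i) (e k)) i k]
    exact hpair _ _
  -- reduce RHS
  have hR : (∑ i, ∑ j, ∑ k, ∑ s, ginv i j * ginv k s * g (N (e i) (e k)) (N (e s) (e j)))
      = ∑ i, ∑ k, ∑ c, g (N (e i) (e k)) (e c) * g (N (d k) (d i)) (d c) := by
    have step1 : (∑ i, ∑ j, ∑ k, ∑ s, ginv i j * ginv k s * g (N (e i) (e k)) (N (e s) (e j)))
        = ∑ i, ∑ k, ∑ j, ∑ s, ginv i j * ginv k s * g (N (e i) (e k)) (N (e s) (e j)) :=
      Finset.sum_congr rfl fun i _ => Finset.sum_comm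
    rw [step1]
    refine Finset.sum_congr rfl fun i _ => Finset.sum_congr rfl fun k _ => ?_
    have step2 : (∑ j, ∑ s, ginv i j * ginv k s * g (N (e i) (e k)) (N (e s) (e j)))
        = ∑ j, ∑ s, ginv k j * ginv i s * g (N (e i) (e k)) (N (e j) (e s)) := by
      rw [Finset.sum_comm]
      exact Finset.sum_congr rfl fun x _ => Finset.sum_congr rfl fun y _ => by ring
    rw [step2, hcollapse (N (e i) (e k)) k i]
    exact hpair _ _
  rw [hL, hR]
  -- main algebraic identity
  have hsplit : ∀ i k c : ι,
      g (N (e i) (e k)) (e c) * g (N (d i) (d k)) (d c)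
      = -(g (N (e i) (e k)) (e c) * g (N (d k) (d i)) (d c))
        - g (N (e i) (e k)) (e c) * g (N (d c) (d k)) (d i) := by
    intro i k c; rw [hB3 i k c]; ring
  simp only [hsplit, Finset.sum_sub_distrib, Finset.sum_neg_distrib]
  have hswap : (∑ i, ∑ k, ∑ c, g (N (e i) (e k)) (e c) * g (N (d c) (d k)) (d i))
      = ∑ i, ∑ k, ∑ c, g (N (e i) (e k)) (e c) * g (N (d k) (d i)) (d c) := by
    refine Finset.sum_congr rfl fun i _ => ?_
    rw [Finset.sum_comm]
    refine Finset.sum_congr rfl fun x _ => Finset.sum_congr rfl fun y _ => ?_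
    rw [hsymV (e i) (e y) (e x), hsymV (d x) (d y) (d i)]
  rw [hswap]
  ring
end

section
/- The quadrilinear form P is curvature-like: P(x,y,z,w) = −P(y,x,z,w) = −P(x,y,w,z) for all x,y,z,w, and 𝔖_{x,y,z} P(x,y,z,w) = 0 for all x,y,z,w. -/
theorem stmt6
    (V : Type*) [AddCommGroup V] [Module ℝ V] [FiniteDimensional ℝ V]
    (g : V →ₗ[ℝ] V →ₗ[ℝ] ℝ)
    (hgsymm : ∀ x y : V, g x y = g y x)
    (hgnd : ∀ x : V, (∀ y : V, g x y = 0) → x = 0)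
    (Q : V →ₗ[ℝ] V →ₗ[ℝ] V)
    (hQskew1 : ∀ x y z : V, g (Q x y) z = -(g (Q y x) z))
    (hQskew2 : ∀ x y z : V, g (Q x y) z = -(g (Q x z) y))
    (P : V → V → V → V → ℝ)
    (hP : ∀ x y z w : V, P x y z w =
      2 * g (Q x y) (Q z w) + g (Q z y) (Q x w) + g (Q x z) (Q y w))
    :
    ∀ x y z w : V,
      P x y z w = -(P y x z w) ∧
      P x y z w = -(P x y w z) ∧
      P x y z w + P y z x w + P z x y w = 0 := by
  have hQ : ∀ a b : V, Q b a = -Q a b := by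
    intro a b
    have h0 : Q b a + Q a b = 0 := by
      apply hgnd
      intro z
      have h1 := hQskew1 a b z
      simp only [map_add, LinearMap.add_apply]
      linarith
    linear_combination (norm := abel) h0
  -- swap in the first pair
  have key1 : ∀ a b c d : V, g (Q b a) (Q c d) = -(g (Q a b) (Q c d)) := by
    intro a b c d
    rw [hQ a b]
    simp
  -- swap in the second pair
  have key2 : ∀ a b c d : V, g (Q a b) (Q d c) = -(g (Q a b) (Q c d)) := by
    intro a b c d
    rw [hQ c d]
    simp
  intro x y z w
  refine ⟨?_, ?_, ?_⟩
  · rw [hP, hP, key1 x y z w, key1 x z y w, key1 z y x w]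
    ring
  · rw [hP, hP, key2 x y z w, key1 y w x z, hgsymm (Q y w) (Q x z),
      key2 x w z y, hgsymm (Q x w) (Q z y), hgsymm (Q z y) (Q x w)]
    ring
  · rw [hP x y z w, hP y z x w, hP z x y w,
      key1 x y z w, key1 x z y w, key1 z y x w]
    ring
end

section
/- The quadrilinear form R' satisfies the first Bianchi identity 𝔖_{x,y,z} R'(x,y,z,w) = 0 for all x,y,z,w if and only if 3R'(x,y,z,w) = 3R(x,y,z,w) + 2g(Q(x,y),Q(z,w)) + g(Q(z,y),Q(x,w)) + g(Q(x,z),Q(y,w)) for all x,y,z,w in V. -/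
theorem stmt7
    (V : Type*) [AddCommGroup V] [Module ℝ V] [FiniteDimensional ℝ V]
    (g : V →ₗ[ℝ] V →ₗ[ℝ] ℝ)
    (hgsymm : ∀ x y : V, g x y = g y x)
    (hgnd : ∀ x : V, (∀ y : V, g x y = 0) → x = 0)
    (Q : V →ₗ[ℝ] V →ₗ[ℝ] V)
    (hQskew1 : ∀ x y z : V, g (Q x y) z = -(g (Q y x) z))
    (hQskew2 : ∀ x y z : V, g (Q x y) z = -(g (Q x z) y))
    (S : V →ₗ[ℝ] V →ₗ[ℝ] V →ₗ[ℝ] V →ₗ[ℝ] ℝ)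
    (hS1 : ∀ x y z w : V, S x y z w = -(S x z y w))
    (hS2 : ∀ x y z w : V, S x y z w = -(S x y w z))
    (R : V →ₗ[ℝ] V →ₗ[ℝ] V →ₗ[ℝ] V →ₗ[ℝ] ℝ)
    (hR1 : ∀ x y z w : V, R x y z w = -(R y x z w))
    (hR2 : ∀ x y z w : V, R x y z w = -(R x y w z))
    (hRB : ∀ x y z w : V, R x y z w + R y z x w + R z x y w = 0)
    (R' : V → V → V → V → ℝ)
    (hR' : ∀ x y z w : V, R' x y z w = R x y z w + S x y z w - S y x z w
      - g (Q y z) (Q x w) + g (Q x z) (Q y w))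
    :
    (∀ x y z w : V, R' x y z w + R' y z x w + R' z x y w = 0)
    ↔
    (∀ x y z w : V, 3 * R' x y z w = 3 * R x y z w + 2 * g (Q x y) (Q z w)
      + g (Q z y) (Q x w) + g (Q x z) (Q y w)) := by
  constructor
  · intro h x y z w
    have h1 := h x y z w
    have h2 := h x y w z
    have h3 := h x z w y
    have h4 := h y z w x
    simp only [hR'] at h1 h2 h3 h4 ⊢
    linarith [hRB x y z w, hRB x y w z, hRB x z w y, hRB y z w x, hS1 x y z w, hS1 x y w z, hS1 x z y w, hS1 x z w y, hS1 x w y z, hS1 x w z y, hS1 y x z w, hS1 y x w z, hS1 y z x w, hS1 y z w x, hS1 y w x z, hS1 y w z x, hS1 z x y w, hS1 z x w y, hS1 z y x w, hS1 z y w x, hS1 z w x y, hS1 z w y x, hS1 w x y z, hS1 w x z y, hS1 w y x z, hS1 w y z x, hS1 w z x y, hS1 w z y x, hS2 x y z w, hS2 x y w z, hS2 x z y w, hS2 x z w y, hS2 x w y z, hS2 x w z y, hS2 y x z w, hS2 y x w z, hS2 y z x w, hS2 y z w x, hS2 y w x z, hS2 y w z x, hS2 z x y w, hS2 z x w y, hS2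 z y x w, hS2 z y w x, hS2 z w x y, hS2 z w y x, hS2 w x y z, hS2 w x z y, hS2 w y x z, hS2 w y z x, hS2 w z x y, hS2 w z y x, hQskew1 x y (Q z w), hQskew1 x y (Q w z), hQskew1 x z (Q y w), hQskew1 x z (Q w y), hQskew1 x w (Q y z), hQskew1 x w (Q z y), hQskew1 y x (Q z w), hQskew1 y x (Q w z), hQskew1 y z (Q x w), hQskew1 y z (Q w x), hQskew1 y w (Q x z), hQskew1 y w (Q z x), hQskew1 z x (Q y w), hQskew1 z x (Q w y), hQskew1 z y (Q x w), hQskew1 z y (Q w x), hQskew1 z w (Q x y), hQskew1 z w (Q y x), hQskew1 w x (Q y z), hQskew1 w x (Q z y), hQskew1 w y (Q x z), hQskew1 w y (Q z x), hQskew1 w z (Q x y), hQskew1 w z (Q y x), hgsymm (Q x y) (Q z w), hgsymm (Q x y) (Q w z), hgsymm (Q x z) (Q y w), hgsymm (Q x z) (Q w y), hgsymm (Q x w) (Q y z), hgsymm (Q x w) (Q z y), hgsymm (Q y x) (Q z w), hgsymm (Q y x) (Q w z), hgsymm (Q y z) (Q x w), hgsymm (Q y z) (Q w x), hgsymm (Q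 y w) (Q x z), hgsymm (Q y w) (Q z x), hgsymm (Q z x) (Q y w), hgsymm (Q z x) (Q w y), hgsymm (Q z y) (Q x w), hgsymm (Q z y) (Q w x), hgsymm (Q z w) (Q x y), hgsymm (Q z w) (Q y x), hgsymm (Q w x) (Q y z), hgsymm (Q w x) (Q z y), hgsymm (Q w y) (Q x z), hgsymm (Q w y) (Q z x), hgsymm (Q w z) (Q x y), hgsymm (Q w z) (Q y x)]
  · intro h x y z w
    have h1 := h x y z w
    have h2 := h y z x w
    have h3 := h z x y w
    linarith [hRB x y z w, hQskew1 x y (Q z w), hQskew1 x y (Q w z), hQskew1 x z (Q y w), hQskew1 x z (Q w y), hQskew1 x w (Q y z), hQskew1 x w (Q z y), hQskew1 y x (Q z w), hQskew1 y x (Q w z), hQskew1 y z (Q x w), hQskew1 y z (Q w x), hQskew1 y w (Q x z), hQskew1 y w (Q z x), hQskew1 z x (Q y w), hQskew1 z x (Q w y), hQskew1 z y (Q x w), hQskew1 z y (Q w x), hQskew1 z w (Q x y), hQskew1 z w (Q y x), hQskew1 w x (Q y z), hQskew1 w x (Q z y), hQskew1 w y (Q x z), hQskew1 w y (Q z x),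 hQskew1 w z (Q x y), hQskew1 w z (Q y x), hgsymm (Q x y) (Q z w), hgsymm (Q x y) (Q w z), hgsymm (Q x z) (Q y w), hgsymm (Q x z) (Q w y), hgsymm (Q x w) (Q y z), hgsymm (Q x w) (Q z y), hgsymm (Q y x) (Q z w), hgsymm (Q y x) (Q w z), hgsymm (Q y z) (Q x w), hgsymm (Q y z) (Q w x), hgsymm (Q y w) (Q x z), hgsymm (Q y w) (Q z x), hgsymm (Q z x) (Q y w), hgsymm (Q z x) (Q w y), hgsymm (Q z y) (Q x w), hgsymm (Q z y) (Q w x), hgsymm (Q z w) (Q x y), hgsymm (Q z w) (Q y x), hgsymm (Q w x) (Q y z), hgsymm (Q w x) (Q z y), hgsymm (Q w y) (Q x z), hgsymm (Q w y) (Q z x), hgsymm (Q w z) (Q x y), hgsymm (Q w z) (Q y x)]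
end

section
/- Assume the structural conditions F(x,y,z) = F(x,z,y) = F(x,Jy,Jz) hold for all x,y,z. Then the quasi-Kähler condition 𝔖_{x,y,z} F(x,y,z) = 0 for all x,y,z holds if and only if N(x,Jy) + N(y,Jx) + N(Jx,y) + N(Jy,x) = 0 for all x,y in V. -/
theorem stmt9
    (V : Type*) [AddCommGroup V] [Module ℝ V] [FiniteDimensional ℝ V]
    (g : V →ₗ[ℝ] V →ₗ[ℝ] ℝ)
    (hgsymm : ∀ x y : V, g x y = g y x)
    (hgnd : ∀ x : V, (∀ y : V, g x y = 0) → x = 0)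
    (J : V →ₗ[ℝ] V)
    (hJ2 : ∀ x : V, J (J x) = -x)
    (hJg : ∀ x y : V, g (J x) (J y) = -(g x y))
    (N : V →ₗ[ℝ] V →ₗ[ℝ] V)
    (F : V → V → V → ℝ)
    (hF : ∀ x y z : V, F x y z = g (N x y) z)
    (hFsym : ∀ x y z : V, F x y z = F x z y)
    (hFJ : ∀ x y z : V, F x y z = F x (J y) (J z))
    :
    (∀ x y z : V, F x y z + F y z x + F z x y = 0)
    ↔
    (∀ x y : V, N x (J y) + N y (J x) + N (J x) y + N (J y) x = 0) := by
  -- Key identity: F a (J b) c = - F a b (J c)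
  have K : ∀ a b c : V, F a (J b) c = -F a b (J c) := by
    intro a b c
    rw [hFJ a (J b) c, hJ2]
    simp [hF, map_neg, LinearMap.neg_apply]
  have negfirst : ∀ a b c : V, F (J (J a)) b c = -F a b c := by
    intro a b c
    rw [hJ2]
    simp [hF, map_neg, LinearMap.neg_apply]
  have neg3 : ∀ a b c : V, F a b (J (J c)) = -F a b c := by
    intro a b c
    rw [hJ2]
    simp [hF, map_neg]
  constructor
  · intro hS x y
    apply hgnd
    intro z
    have goal' : F x (J y) z + F y (J x) z + F (J x) y z + F (J y) x z = 0 := by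
      have h1 := hS (J x) y z
      have h2 := hS (J y) x z
      have k3 := K z y x
      have s1 := hFsym y z (J x)
      have s2 := hFsym z (J x) y
      have s3 := hFsym x z (J y)
      linarith
    simp only [map_add, LinearMap.add_apply]
    simp only [← hF]
    linarith
  · intro hN
    have hT : ∀ x y z : V, F x (J y) z + F y (J x) z + F (J x) y z + F (J y) x z = 0 := by
      intro x y z
      have h := congrArg (fun w => g w z) (hN x y)
      simpa only [map_add, LinearMap.add_apply, map_zero, LinearMap.zero_apply, ← hF] using h
    have hStar : ∀ x y z : V, F (J x) y z + F (J y) x z = F x y (J z) + F y x (J z) := by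
      intro x y z
      have h := hT x y z
      have k1 := K x y z
      have k2 := K y x z
      linarith
    have hA : ∀ x y z : V,
        F (J x) (J y) z + F (J z) (J y) x = -(F x z y + F z x y) := by
      intro x y z
      have h := hStar x z (J y)
      have n1 := neg3 x z y
      have n2 := neg3 z x y
      have s1 := hFsym (J x) z (J y)
      have s2 := hFsym (J z) x (J y)
      linarith
    have hB : ∀ x y z : V,
        F (J x) (J y) z + F (J y) (J x) z = F x y z + F y x z := by
      intro x y z
      have h := hStar (J x) y z
      have n1 := negfirst x y z
      have e1 := hFJ y x z
      have s1 := hFsym (J x) y (J z)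
      have k1 := K (J x) z y
      have s2 := hFsym (J x) z (J y)
      linarith
    intro x y z
    have a1 := hA x y z
    have a2 := hA y z x
    have a3 := hA z x y
    have b1 := hB x y z
    have b2 := hB y z x
    have b3 := hB z x y
    have s1 := hFsym x y z
    have s2 := hFsym y z x
    have s3 := hFsym z x y
    linarith
end

section
/- One has τ(P) = (9/8)·‖∇J‖². -/
set_option maxHeartbeats 2000000

open Finset Matrix

section Helpers

lemma sum_nest4 {ι M : Type*} [Fintype ι] [AddCommMonoid M] (f : ι → ι → ι → ι → M) :
    (∑ i, ∑ j, ∑ k, ∑ s, f i j k s) = ∑ x : ι × ι × ι × ι, f x.1 x.2.1 x.2.2.1 x.2.2.2 := by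
  simp [Fintype.sum_prod_type]

lemma sum_nest6 {ι M : Type*} [Fintype ι] [AddCommMonoid M] (f : ι → ι → ι → ι → ι → ι → M) :
    (∑ i, ∑ j, ∑ k, ∑ s, ∑ a, ∑ b, f i j k s a b)
      = ∑ x : ι × ι × ι × ι × ι × ι, f x.1 x.2.1 x.2.2.1 x.2.2.2.1 x.2.2.2.2.1 x.2.2.2.2.2 := by
  simp [Fintype.sum_prod_type]

/-- swap the two pairs -/
lemma sum_reindex4 {ι M : Type*} [Fintype ι] [AddCommMonoid M] (f : ι → ι → ι → ι → M) :
    (∑ i, ∑ j, ∑ k, ∑ s, f i j k s) = ∑ i, ∑ j, ∑ k, ∑ s, f k s i j := by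
  rw [sum_nest4, sum_nest4]
  exact (Equiv.sum_comp (⟨fun x => (x.2.2.1, x.2.2.2, x.1, x.2.1),
    fun x => (x.2.2.1, x.2.2.2, x.1, x.2.1), fun x => rfl, fun x => rfl⟩ :
      (ι×ι×ι×ι) ≃ (ι×ι×ι×ι)) (fun x => f x.1 x.2.1 x.2.2.1 x.2.2.2)).symm

lemma sum_reindex4' {ι M : Type*} [Fintype ι] [AddCommMonoid M] (f : ι → ι → ι → ι → M) :
    (∑ i, ∑ j, ∑ k, ∑ s, f i j k s) = ∑ i, ∑ j, ∑ k, ∑ s, f s k i j := by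
  rw [sum_nest4, sum_nest4]
  exact (Equiv.sum_comp (⟨fun x => (x.2.2.2, x.2.2.1, x.1, x.2.1),
    fun y => (y.2.2.1, y.2.2.2, y.2.1, y.1), fun x => rfl, fun x => rfl⟩ :
      (ι×ι×ι×ι) ≃ (ι×ι×ι×ι)) (fun x => f x.1 x.2.1 x.2.2.1 x.2.2.2)).symm

lemma sum_swap34 {ι M : Type*} [Fintype ι] [AddCommMonoid M] (f : ι → ι → ι → ι → M) :
    (∑ i, ∑ j, ∑ k, ∑ s, f i j k s) = ∑ i, ∑ j, ∑ k, ∑ s, f i j s k := by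
  rw [sum_nest4, sum_nest4]
  exact (Equiv.sum_comp (⟨fun x => (x.1, x.2.1, x.2.2.2, x.2.2.1),
    fun x => (x.1, x.2.1, x.2.2.2, x.2.2.1), fun x => rfl, fun x => rfl⟩ :
      (ι×ι×ι×ι) ≃ (ι×ι×ι×ι)) (fun x => f x.1 x.2.1 x.2.2.1 x.2.2.2)).symm

/-- cycle the three pairs -/
lemma sum_reindex6 {ι M : Type*} [Fintype ι] [AddCommMonoid M] (f : ι → ι → ι → ι → ι → ι → M) :
    (∑ i, ∑ j, ∑ k, ∑ s, ∑ a, ∑ b, f i j k s a b)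
      = ∑ i, ∑ j, ∑ k, ∑ s, ∑ a, ∑ b, f k s a b i j := by
  rw [sum_nest6, sum_nest6]
  exact (Equiv.sum_comp (⟨
    fun x => (x.2.2.1, x.2.2.2.1, x.2.2.2.2.1, x.2.2.2.2.2, x.1, x.2.1),
    fun x => (x.2.2.2.2.1, x.2.2.2.2.2, x.1, x.2.1, x.2.2.1, x.2.2.2.1),
    fun x => rfl, fun x => rfl⟩ : (ι×ι×ι×ι×ι×ι) ≃ (ι×ι×ι×ι×ι×ι))
    (fun x => f x.1 x.2.1 x.2.2.1 x.2.2.2.1 x.2.2.2.2.1 x.2.2.2.2.2)).symm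

variable {V : Type*} [AddCommGroup V] [Module ℝ V]
variable {ι : Type*} [Fintype ι] [DecidableEq ι]

lemma ginv_symm (g : V →ₗ[ℝ] V →ₗ[ℝ] ℝ) (e : Module.Basis ι ℝ V) (ginv : ι → ι → ℝ)
    (hgsymm : ∀ x y : V, g x y = g y x)
    (hginv : ∀ i j : ι, (∑ k, ginv i k * g (e k) (e j)) = if i = j then (1:ℝ) else 0) :
    ∀ i j : ι, ginv i j = ginv j i := by
  have hAB : (Matrix.of ginv) * (Matrix.of fun i j => g (e i) (e j)) = 1 := by
    ext i j
    simpa [Matrix.mul_apply, Matrix.one_apply] using hginv i j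
  have hBA := mul_eq_one_comm.mp hAB
  have hBsym : (Matrix.of fun i j => g (e i) (e j))ᵀ = Matrix.of fun i j => g (e i) (e j) := by
    ext i j; exact hgsymm (e j) (e i)
  have hsym : (Matrix.of ginv)ᵀ = Matrix.of ginv := by
    calc (Matrix.of ginv)ᵀ
        = (Matrix.of ginv)ᵀ * ((Matrix.of fun i j => g (e i) (e j)) * (Matrix.of ginv)) := by
          rw [hBA, Matrix.mul_one]
      _ = ((Matrix.of fun i j => g (e i) (e j)) * (Matrix.of ginv))ᵀ * (Matrix.of ginv) := by
          rw [Matrix.transpose_mul, hBsym, Matrix.mul_assoc]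
      _ = Matrix.of ginv := by rw [hBA, Matrix.transpose_one, Matrix.one_mul]
  intro i j
  exact (congrArg (fun M => M j i) hsym)

lemma co_eq (g : V →ₗ[ℝ] V →ₗ[ℝ] ℝ) (e : Module.Basis ι ℝ V) (ginv : ι → ι → ℝ)
    (hginv : ∀ i j : ι, (∑ k, ginv i k * g (e k) (e j)) = if i = j then (1:ℝ) else 0) :
    ∀ w : V, (∑ s, (∑ k, ginv s k * g (e k) w) • e s) = w := by
  intro w
  have hstep : ∀ s : ι, (∑ k, ginv s k * g (e k) w)
      = ∑ c, (e.repr w) c * (if s = c then 1 else 0) := by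
    intro s
    calc (∑ k, ginv s k * g (e k) w)
        = ∑ k, ginv s k * g (e k) (∑ c, (e.repr w) c • e c) := by rw [Module.Basis.sum_repr]
      _ = ∑ k, ∑ c, (e.repr w) c * (ginv s k * g (e k) (e c)) := by
          refine Finset.sum_congr rfl fun k _ => ?_
          simp only [map_sum, _root_.map_smul, smul_eq_mul, Finset.mul_sum]
          exact Finset.sum_congr rfl fun c _ => by ring
      _ = ∑ c, (e.repr w) c * (∑ k, ginv s k * g (e k) (e c)) := by
          rw [Finset.sum_comm]
          exact Finset.sum_congr rfl fun c _ => by rw [Finset.mul_sum]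
      _ = ∑ c, (e.repr w) c * (if s = c then 1 else 0) := by
          exact Finset.sum_congr rfl fun c _ => by rw [hginv s c]
  calc (∑ s, (∑ k, ginv s k * g (e k) w) • e s)
      = ∑ s, (e.repr w) s • e s := by
        refine Finset.sum_congr rfl fun s _ => ?_
        rw [hstep s]
        simp
    _ = w := Module.Basis.sum_repr e w

lemma moveJ (g : V →ₗ[ℝ] V →ₗ[ℝ] ℝ) (e : Module.Basis ι ℝ V) (ginv : ι → ι → ℝ) (J : V →ₗ[ℝ] V)
    (hco : ∀ w : V, (∑ s, (∑ k, ginv s k * g (e k) w) • e s) = w)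
    (hgis : ∀ i j : ι, ginv i j = ginv j i)
    (hgsymm : ∀ x y : V, g x y = g y x)
    (hJsa : ∀ x y : V, g (J x) y = g x (J y))
    (B : V →ₗ[ℝ] V →ₗ[ℝ] ℝ) :
    (∑ k, ∑ s, ginv k s * B (J (e k)) (e s)) = ∑ k, ∑ s, ginv k s * B (e k) (J (e s)) := by
  have h1 : ∀ k s : ι, B (J (e k)) (e s)
      = ∑ b, ∑ a, (ginv b a * g (e a) (J (e k))) * B (e b) (e s) := by
    intro k s
    conv_lhs => rw [← hco (J (e k))]
    simp only [map_sum, _root_.map_smul, LinearMap.sum_apply, LinearMap.smul_apply,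
      smul_eq_mul, Finset.sum_mul]
  calc (∑ k, ∑ s, ginv k s * B (J (e k)) (e s))
      = ∑ k, ∑ s, ∑ b, ∑ a, ginv k s * ((ginv b a * g (e a) (J (e k))) * B (e b) (e s)) := by
        simp only [h1, Finset.mul_sum]
    _ = ∑ k, ∑ s, ∑ b, ∑ a, ginv b a * ((ginv s k * g (e k) (J (e a))) * B (e b) (e s)) := by
        refine Finset.sum_congr rfl fun k _ => Finset.sum_congr rfl fun s _ =>
          Finset.sum_congr rfl fun b _ => Finset.sum_congr rfl fun a _ => ?_
        rw [show g (e a) (J (e k)) = g (e k) (J (e a)) from by rw [hgsymm, hJsa], hgis k s]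
        ring
    _ = ∑ b, ∑ a, ∑ s, ∑ k, ginv b a * ((ginv s k * g (e k) (J (e a))) * B (e b) (e s)) := by
        exact sum_reindex4' _
    _ = ∑ b, ∑ a, ginv b a * B (e b) (J (e a)) := by
        refine Finset.sum_congr rfl fun b _ => Finset.sum_congr rfl fun a _ => ?_
        simp only [← Finset.mul_sum]
        congr 1
        calc (∑ s, ∑ k, (ginv s k * g (e k) (J (e a))) * B (e b) (e s))
            = ∑ s, (∑ k, ginv s k * g (e k) (J (e a))) * B (e b) (e s) := by
              refine Finset.sum_congr rfl fun s _ => ?_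
              rw [Finset.sum_mul]
          _ = B (e b) (∑ s, (∑ k, ginv s k * g (e k) (J (e a))) • e s) := by
              simp only [map_sum, _root_.map_smul, smul_eq_mul]
          _ = B (e b) (J (e a)) := by rw [hco]

end Helpers

noncomputable def tauL {V : Type*} [AddCommGroup V] [Module ℝ V] {ι : Type*} [Fintype ι]
    (e : Module.Basis ι ℝ V) (ginv : ι → ι → ℝ) (L : V → V → V → V → ℝ) : ℝ :=
  ∑ i, ∑ j, ∑ k, ∑ s, ginv i j * ginv k s * L (e i) (e k) (e s) (e j)

noncomputable def tauStarL {V : Type*} [AddCommGroup V] [Module ℝ V] {ι : Type*} [Fintype ι]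
    (J : V →ₗ[ℝ] V) (e : Module.Basis ι ℝ V) (ginv : ι → ι → ℝ) (L : V → V → V → V → ℝ) : ℝ :=
  ∑ i, ∑ j, ∑ k, ∑ s, ginv i j * ginv k s * L (e i) (e k) (e s) (J (e j))

noncomputable def normNablaJ {V : Type*} [AddCommGroup V] [Module ℝ V] {ι : Type*} [Fintype ι]
    (g : V →ₗ[ℝ] V →ₗ[ℝ] ℝ) (N : V →ₗ[ℝ] V →ₗ[ℝ] V) (e : Module.Basis ι ℝ V)
    (ginv : ι → ι → ℝ) : ℝ :=
  ∑ i, ∑ j, ∑ k, ∑ s, ginv i j * ginv k s * g (N (e i) (e k)) (N (e j) (e s))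

theorem stmt12
    (V : Type*) [AddCommGroup V] [Module ℝ V] [FiniteDimensional ℝ V]
    (g : V →ₗ[ℝ] V →ₗ[ℝ] ℝ)
    (hgsymm : ∀ x y : V, g x y = g y x)
    (hgnd : ∀ x : V, (∀ y : V, g x y = 0) → x = 0)
    (J : V →ₗ[ℝ] V)
    (hJ2 : ∀ x : V, J (J x) = -x)
    (hJg : ∀ x y : V, g (J x) (J y) = -(g x y))
    (N : V →ₗ[ℝ] V →ₗ[ℝ] V)
    (F : V → V → V → ℝ)
    (hF : ∀ x y z : V, F x y z = g (N x y) z)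
    (hFsym : ∀ x y z : V, F x y z = F x z y)
    (hFJ : ∀ x y z : V, F x y z = F x (J y) (J z))
    (hQK : ∀ x y z : V, F x y z + F y z x + F z x y = 0)
    (Q : V → V → V)
    (hQ : ∀ x y : V, Q x y = (1/4 : ℝ) • (N x (J y) - N (J x) y - (2 : ℝ) • N y (J x)))
    (P : V → V → V → V → ℝ)
    (hP : ∀ x y z w : V, P x y z w =
      2 * g (Q x y) (Q z w) + g (Q z y) (Q x w) + g (Q x z) (Q y w))
    {ι : Type*} [Fintype ι] [DecidableEq ι]
    (e : Module.Basis ι ℝ V)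
    (ginv : ι → ι → ℝ)
    (hginv : ∀ i j : ι, (∑ k, ginv i k * g (e k) (e j)) = if i = j then (1:ℝ) else 0)
    :
    tauL e ginv P = (9/8 : ℝ) * normNablaJ g N e ginv := by
  classical
  -- basic derived facts
  have hgis : ∀ i j : ι, ginv i j = ginv j i := ginv_symm g e ginv hgsymm hginv
  have hco : ∀ w : V, (∑ s, (∑ k, ginv s k * g (e k) w) • e s) = w := co_eq g e ginv hginv
  have hJsa : ∀ x y : V, g (J x) y = g x (J y) := by
    intro x y
    have h := hJg x (J y)
    rw [hJ2 y] at h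
    simpa using h
  have hsym : ∀ x y z : V, g (N x y) z = g (N x z) y := by
    intro x y z; rw [← hF, hFsym, hF]
  have hNJz : ∀ x y z : V, g (N x y) z = g (N x (J y)) (J z) := by
    intro x y z; rw [← hF, hFJ, hF]
  have hcyc : ∀ x y z : V, g (N x y) z + g (N y z) x + g (N z x) y = 0 := by
    intro x y z; rw [← hF, ← hF, ← hF]; exact hQK x y z
  have hE : ∀ x y : V, N x (J y) = -(J (N x y)) := by
    intro x y
    have key : ∀ w : V, g (N x (J y) + J (N x y)) w = 0 := by
      intro w
      have h1 : g (N x (J y)) w = -(g (N x y) (J w)) := by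
        have h2 := hNJz x y (-(J w))
        simp only [map_neg, hJ2, neg_neg] at h2
        rw [← h2]
      have h3 : g (J (N x y)) w = g (N x y) (J w) := hJsa _ _
      rw [map_add, LinearMap.add_apply, h1, h3]
      ring
    have h0 := hgnd _ key
    linear_combination (norm := module) h0
  have hq : ∀ x y : V, Q x y
      = (1/4 : ℝ) • (-(J (N x y)) - N (J x) y + (2:ℝ) • J (N y x)) := by
    intro x y
    rw [hQ, hE x y, hE y x]
    module
  -- moveJ wrappers for quadruple sums
  have moveKS : ∀ (B : ι → ι → V →ₗ[ℝ] V →ₗ[ℝ] ℝ),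
      (∑ i, ∑ j, ∑ k, ∑ s, ginv i j * ginv k s * (B i j) (J (e k)) (e s))
        = ∑ i, ∑ j, ∑ k, ∑ s, ginv i j * ginv k s * (B i j) (e k) (J (e s)) := by
    intro B
    refine Finset.sum_congr rfl fun i _ => Finset.sum_congr rfl fun j _ => ?_
    simp only [mul_assoc, ← Finset.mul_sum]
    rw [moveJ g e ginv J hco hgis hgsymm hJsa (B i j)]
  have moveIJ : ∀ (B : ι → ι → V →ₗ[ℝ] V →ₗ[ℝ] ℝ),
      (∑ i, ∑ j, ∑ k, ∑ s, ginv i j * ginv k s * (B k s) (J (e i)) (e j))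
        = ∑ i, ∑ j, ∑ k, ∑ s, ginv i j * ginv k s * (B k s) (e i) (J (e j)) := by
    intro B
    rw [sum_reindex4 (fun i j k s => ginv i j * ginv k s * (B k s) (J (e i)) (e j))]
    rw [sum_reindex4 (fun i j k s => ginv i j * ginv k s * (B k s) (e i) (J (e j)))]
    have h1 : (∑ i, ∑ j, ∑ k, ∑ s, ginv k s * ginv i j * (B i j) (J (e k)) (e s))
        = ∑ i, ∑ j, ∑ k, ∑ s, ginv i j * ginv k s * (B i j) (J (e k)) (e s) := by
      refine Finset.sum_congr rfl fun i _ => Finset.sum_congr rfl fun j _ =>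
        Finset.sum_congr rfl fun k _ => Finset.sum_congr rfl fun s _ => by ring
    have h2 : (∑ i, ∑ j, ∑ k, ∑ s, ginv k s * ginv i j * (B i j) (e k) (J (e s)))
        = ∑ i, ∑ j, ∑ k, ∑ s, ginv i j * ginv k s * (B i j) (e k) (J (e s)) := by
      refine Finset.sum_congr rfl fun i _ => Finset.sum_congr rfl fun j _ =>
        Finset.sum_congr rfl fun k _ => Finset.sum_congr rfl fun s _ => by ring
    rw [h1, h2]
    exact moveKS B
  -- the trace functional θ vanishes
  have hphi : ∀ w : V, (∑ i, ∑ j, ginv i j * g (N w (e i)) (e j)) = 0 := by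
    intro w
    have hB := moveJ g e ginv J hco hgis hgsymm hJsa
      (LinearMap.mk₂ ℝ (fun x y => g (N w x) (J y))
        (by intros; simp [map_add, LinearMap.add_apply])
        (by intros; simp [_root_.map_smul, LinearMap.smul_apply, smul_eq_mul])
        (by intros; simp [map_add])
        (by intros; simp [_root_.map_smul, smul_eq_mul]))
    simp only [LinearMap.mk₂_apply] at hB
    have h1 : (∑ i, ∑ j, ginv i j * g (N w (e i)) (e j))
        = ∑ i, ∑ j, ginv i j * g (N w (J (e i))) (J (e j)) := by
      refine Finset.sum_congr rfl fun i _ => Finset.sum_congr rfl fun j _ => ?_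
      rw [hNJz]
    have h2 : (∑ i, ∑ j, ginv i j * g (N w (e i)) (J (J (e j))))
        = -∑ i, ∑ j, ginv i j * g (N w (e i)) (e j) := by
      rw [← Finset.sum_neg_distrib]
      refine Finset.sum_congr rfl fun i _ => ?_
      rw [← Finset.sum_neg_distrib]
      refine Finset.sum_congr rfl fun j _ => ?_
      rw [hJ2, map_neg]
      ring
    rw [h1, hB, h2] at *
    linarith [h1, hB, h2]
  have htheta : ∀ w : V, (∑ i, ∑ j, ginv i j * g (N (e i) (e j)) w) = 0 := by
    intro w
    have h3 : (∑ i, ∑ j, ginv i j *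
        (g (N (e i) (e j)) w + g (N (e j) w) (e i) + g (N w (e i)) (e j))) = 0 := by
      refine Finset.sum_eq_zero fun i _ => Finset.sum_eq_zero fun j _ => ?_
      rw [hcyc, mul_zero]
    simp only [mul_add, Finset.sum_add_distrib] at h3
    have hmid : (∑ i, ∑ j, ginv i j * g (N (e j) w) (e i))
        = ∑ i, ∑ j, ginv i j * g (N (e i) (e j)) w := by
      rw [Finset.sum_comm]
      refine Finset.sum_congr rfl fun i _ => Finset.sum_congr rfl fun j _ => ?_
      rw [hsym, hgis]
    rw [hmid, hphi w] at h3
    linarith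
  have hQg : ∀ x y z : V, g (Q x y) z
      = (1/4) * (-(g (N x y) (J z)) - g (N (J x) y) z + 2*(g (N y x) (J z))) := by
    intro x y z
    rw [hq]
    simp only [_root_.map_smul, map_add, map_sub, map_neg, LinearMap.smul_apply,
      LinearMap.add_apply, LinearMap.sub_apply, LinearMap.neg_apply, smul_eq_mul, hJsa]
  have hv : (∑ i, ∑ j, ginv i j • Q (e i) (e j)) = 0 := by
    refine hgnd _ fun y => ?_
    have hexp : g (∑ i, ∑ j, ginv i j • Q (e i) (e j)) y
        = ∑ i, ∑ j, ginv i j * g (Q (e i) (e j)) y := by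
      simp [map_sum, _root_.map_smul, LinearMap.sum_apply, LinearMap.smul_apply, smul_eq_mul]
    rw [hexp]
    have hA : (∑ i, ∑ j, ginv i j * g (N (e i) (e j)) (J y)) = 0 := htheta (J y)
    have hC : (∑ i, ∑ j, ginv i j * g (N (e j) (e i)) (J y)) = 0 := by
      rw [Finset.sum_comm]
      have : (∑ j, ∑ i, ginv i j * g (N (e j) (e i)) (J y))
          = ∑ i, ∑ j, ginv i j * g (N (e i) (e j)) (J y) := by
        refine Finset.sum_congr rfl fun j _ => Finset.sum_congr rfl fun i _ => ?_
        rw [hgis]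
      rw [this]; exact htheta (J y)
    have hBt : (∑ i, ∑ j, ginv i j * g (N (J (e i)) (e j)) y) = 0 := by
      have hB := moveJ g e ginv J hco hgis hgsymm hJsa
        (LinearMap.mk₂ ℝ (fun x y' => g (N x y') y)
          (by intros; simp [map_add, LinearMap.add_apply])
          (by intros; simp [_root_.map_smul, LinearMap.smul_apply, smul_eq_mul])
          (by intros; simp [map_add, LinearMap.add_apply])
          (by intros; simp [_root_.map_smul, LinearMap.smul_apply, smul_eq_mul]))
      simp only [LinearMap.mk₂_apply] at hB
      rw [hB]
      have : (∑ i, ∑ j, ginv i j * g (N (e i) (J (e j))) y)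
          = -∑ i, ∑ j, ginv i j * g (N (e i) (e j)) (J y) := by
        rw [← Finset.sum_neg_distrib]
        refine Finset.sum_congr rfl fun i _ => ?_
        rw [← Finset.sum_neg_distrib]
        refine Finset.sum_congr rfl fun j _ => ?_
        rw [hE]
        simp only [map_neg, LinearMap.neg_apply, hJsa]
        ring
      rw [this, hA, neg_zero]
    calc (∑ i, ∑ j, ginv i j * g (Q (e i) (e j)) y)
        = ∑ i, ∑ j, ((-1/4)*(ginv i j * g (N (e i) (e j)) (J y))
            + (-1/4)*(ginv i j * g (N (J (e i)) (e j)) y)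
            + (1/2)*(ginv i j * g (N (e j) (e i)) (J y))) := by
          refine Finset.sum_congr rfl fun i _ => Finset.sum_congr rfl fun j _ => ?_
          rw [hQg]; ring
      _ = (-1/4)*(∑ i, ∑ j, ginv i j * g (N (e i) (e j)) (J y))
            + (-1/4)*(∑ i, ∑ j, ginv i j * g (N (J (e i)) (e j)) y)
            + (1/2)*(∑ i, ∑ j, ginv i j * g (N (e j) (e i)) (J y)) := by
          simp only [Finset.sum_add_distrib, ← Finset.mul_sum]
      _ = 0 := by rw [hA, hBt, hC]; ring
  have hwv : ∀ w : V, (∑ k, ∑ s, ginv k s * g w (Q (e k) (e s))) = 0 := by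
    intro w
    have h := congrArg (fun v => g w v) hv
    simpa [map_sum, _root_.map_smul, smul_eq_mul] using h
  -- pointwise congruence helpers
  have scongr4 : ∀ (f f' : ι → ι → ι → ι → ℝ), (∀ i j k s, f i j k s = f' i j k s) →
      (∑ i, ∑ j, ∑ k, ∑ s, f i j k s) = ∑ i, ∑ j, ∑ k, ∑ s, f' i j k s := by
    intro f f' h
    exact Finset.sum_congr rfl fun i _ => Finset.sum_congr rfl fun j _ =>
      Finset.sum_congr rfl fun k _ => Finset.sum_congr rfl fun s _ => h i j k s
  have scongr6 : ∀ (f f' : ι → ι → ι → ι → ι → ι → ℝ), (∀ i j k s a b, f i j k s a b = f' i j k s a b) →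
      (∑ i, ∑ j, ∑ k, ∑ s, ∑ a, ∑ b, f i j k s a b) = ∑ i, ∑ j, ∑ k, ∑ s, ∑ a, ∑ b, f' i j k s a b := by
    intro f f' h
    exact Finset.sum_congr rfl fun i _ => Finset.sum_congr rfl fun j _ =>
      Finset.sum_congr rfl fun k _ => Finset.sum_congr rfl fun s _ =>
      Finset.sum_congr rfl fun a _ => Finset.sum_congr rfl fun b _ => h i j k s a b
  -- expansion of composite arguments
  have hNexp : ∀ w x y : V, g (N w x) y = ∑ a, ∑ b, ginv a b * g (e b) w * g (N (e a) x) y := by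
    intro w x y
    conv_lhs => rw [← hco w]
    simp only [map_sum, _root_.map_smul, LinearMap.sum_apply, LinearMap.smul_apply,
      smul_eq_mul, Finset.sum_mul]
  have hgexp : ∀ u v : V, g u v = ∑ a, ∑ b, ginv a b * g (e b) v * g u (e a) := by
    intro u v
    conv_lhs => rw [← hco v]
    simp only [map_sum, _root_.map_smul, smul_eq_mul, Finset.sum_mul]
  -- key 6-index identity : t3S = mS
  have hC2' : (∑ i, ∑ j, ∑ k, ∑ s, ginv i j * ginv k s * g (N (e k) (e i)) (N (e j) (e s)))
      = ∑ i, ∑ j, ∑ k, ∑ s, ginv i j * ginv k s * g (N (e i) (e k)) (N (e s) (e j)) := by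
    rw [sum_reindex4 (fun i j k s => ginv i j * ginv k s * g (N (e k) (e i)) (N (e j) (e s)))]
    exact scongr4 _ _ fun i j k s => by ring
  have ht3 : (∑ i, ∑ j, ∑ k, ∑ s, ginv i j * ginv k s * g (N (N (e j) (e s)) (e i)) (e k))
      = ∑ i, ∑ j, ∑ k, ∑ s, ginv i j * ginv k s * g (N (e i) (e k)) (N (e s) (e j)) := by
    have hpt : ∀ i j k s : ι, g (N (N (e j) (e s)) (e i)) (e k)
        = ∑ a, ∑ b, ginv a b * g (e b) (N (e j) (e s)) * g (N (e a) (e i)) (e k) :=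
      fun i j k s => hNexp _ _ _
    have hpt2 : ∀ i j k s : ι, g (N (e i) (e k)) (N (e s) (e j))
        = ∑ a, ∑ b, ginv a b * g (e b) (N (e s) (e j)) * g (N (e i) (e k)) (e a) :=
      fun i j k s => hgexp _ _
    calc (∑ i, ∑ j, ∑ k, ∑ s, ginv i j * ginv k s * g (N (N (e j) (e s)) (e i)) (e k))
        = ∑ i, ∑ j, ∑ k, ∑ s, ∑ a, ∑ b, ginv i j * ginv k s *
            (ginv a b * g (e b) (N (e j) (e s)) * g (N (e a) (e i)) (e k)) := by
          simp only [hpt, Finset.mul_sum]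
      _ = ∑ i, ∑ j, ∑ k, ∑ s, ∑ a, ∑ b, ginv i j * ginv k s * ginv a b *
            (g (N (e j) (e b)) (e s) * g (N (e a) (e i)) (e k)) := by
          refine scongr6 _ _ fun i j k s a b => ?_
          rw [show g (e b) (N (e j) (e s)) = g (N (e j) (e b)) (e s) from by rw [hgsymm, hsym]]
          ring
      _ = ∑ i, ∑ j, ∑ k, ∑ s, ∑ a, ∑ b, ginv k s * ginv a b * ginv i j *
            (g (N (e s) (e j)) (e b) * g (N (e i) (e k)) (e a)) := by
          exact sum_reindex6 (fun i j k s a b => ginv i j * ginv k s * ginv a b *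
            (g (N (e j) (e b)) (e s) * g (N (e a) (e i)) (e k)))
      _ = ∑ i, ∑ j, ∑ k, ∑ s, ∑ a, ∑ b, ginv i j * ginv k s *
            (ginv a b * g (e b) (N (e s) (e j)) * g (N (e i) (e k)) (e a)) := by
          refine scongr6 _ _ fun i j k s a b => ?_
          rw [show g (e b) (N (e s) (e j)) = g (N (e s) (e j)) (e b) from hgsymm _ _]
          ring
      _ = ∑ i, ∑ j, ∑ k, ∑ s, ginv i j * ginv k s * g (N (e i) (e k)) (N (e s) (e j)) := by
          have hmexp : (∑ i, ∑ j, ∑ k, ∑ s, ginv i j * ginv k s * g (N (e i) (e k)) (N (e s) (e j)))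
              = ∑ i, ∑ j, ∑ k, ∑ s, ∑ a, ∑ b, ginv i j * ginv k s *
                (ginv a b * g (e b) (N (e s) (e j)) * g (N (e i) (e k)) (e a)) := by
            simp only [hpt2, Finset.mul_sum]
          exact hmexp.symm
  -- the identity nS + 2 mS = 0
  have hmn : (∑ i, ∑ j, ∑ k, ∑ s, ginv i j * ginv k s * g (N (e i) (e k)) (N (e j) (e s)))
      + 2 * (∑ i, ∑ j, ∑ k, ∑ s, ginv i j * ginv k s * g (N (e i) (e k)) (N (e s) (e j))) = 0 := by
    have h0 : (∑ i, ∑ j, ∑ k, ∑ s, ginv i j * ginv k s *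
        (g (N (e i) (e k)) (N (e j) (e s)) + g (N (e k) (N (e j) (e s))) (e i)
          + g (N (N (e j) (e s)) (e i)) (e k))) = 0 := by
      refine Finset.sum_eq_zero fun i _ => Finset.sum_eq_zero fun j _ =>
        Finset.sum_eq_zero fun k _ => Finset.sum_eq_zero fun s _ => ?_
      rw [hcyc, mul_zero]
    simp only [mul_add, Finset.sum_add_distrib] at h0
    have hmidv : (∑ i, ∑ j, ∑ k, ∑ s, ginv i j * ginv k s * g (N (e k) (N (e j) (e s))) (e i))
        = ∑ i, ∑ j, ∑ k, ∑ s, ginv i j * ginv k s * g (N (e i) (e k)) (N (e s) (e j)) := by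
      have step1 : (∑ i, ∑ j, ∑ k, ∑ s, ginv i j * ginv k s * g (N (e k) (N (e j) (e s))) (e i))
          = ∑ i, ∑ j, ∑ k, ∑ s, ginv i j * ginv k s * g (N (e k) (e i)) (N (e j) (e s)) :=
        scongr4 _ _ fun i j k s => by rw [hsym]
      exact step1.trans hC2'
    rw [hmidv, ht3] at h0
    linarith
  -- the identity pS = 0
  have hp0 : (∑ i, ∑ j, ∑ k, ∑ s, ginv i j * ginv k s *
      g (N (J (e i)) (e k)) (J (N (e j) (e s)))) = 0 := by
    have h0 : (∑ i, ∑ j, ∑ k, ∑ s, ginv i j * ginv k s *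
        (g (N (J (e i)) (e k)) (J (N (e j) (e s)))
          + g (N (e k) (J (N (e j) (e s)))) (J (e i))
          + g (N (J (N (e j) (e s))) (J (e i))) (e k))) = 0 := by
      refine Finset.sum_eq_zero fun i _ => Finset.sum_eq_zero fun j _ =>
        Finset.sum_eq_zero fun k _ => Finset.sum_eq_zero fun s _ => ?_
      rw [hcyc, mul_zero]
    simp only [mul_add, Finset.sum_add_distrib] at h0
    have hBp : (∑ i, ∑ j, ∑ k, ∑ s, ginv i j * ginv k s *
        g (N (e k) (J (N (e j) (e s)))) (J (e i)))
        = ∑ i, ∑ j, ∑ k, ∑ s, ginv i j * ginv k s * g (N (e i) (e k)) (N (e s) (e j)) := by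
      have step1 : (∑ i, ∑ j, ∑ k, ∑ s, ginv i j * ginv k s *
          g (N (e k) (J (N (e j) (e s)))) (J (e i)))
          = ∑ i, ∑ j, ∑ k, ∑ s, ginv i j * ginv k s * g (N (e k) (e i)) (N (e j) (e s)) :=
        scongr4 _ _ fun i j k s => by
          rw [hsym, hE (e k) (e i)]
          simp only [map_neg, LinearMap.neg_apply, hJg, neg_neg]
      exact step1.trans hC2'
    have hCp : (∑ i, ∑ j, ∑ k, ∑ s, ginv i j * ginv k s *
        g (N (J (N (e j) (e s))) (J (e i))) (e k))
        = -(∑ i, ∑ j, ∑ k, ∑ s, ginv i j * ginv k s * g (N (e i) (e k)) (N (e s) (e j))) := by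
      have step1 : (∑ i, ∑ j, ∑ k, ∑ s, ginv i j * ginv k s *
          g (N (J (N (e j) (e s))) (J (e i))) (e k))
          = ∑ i, ∑ j, ∑ k, ∑ s, -(ginv i j * ginv k s *
            g (N (J (N (e j) (e s))) (e i)) (J (e k))) :=
        scongr4 _ _ fun i j k s => by
          rw [hE (J (N (e j) (e s))) (e i)]
          simp only [map_neg, LinearMap.neg_apply, hJsa]
          ring
      have hm := moveKS (fun i j => LinearMap.mk₂ ℝ
        (fun x y => g (N (J (N (e j) y)) (e i)) x)
        (by intros; simp [map_add, LinearMap.add_apply])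
        (by intros; simp [_root_.map_smul, LinearMap.smul_apply, smul_eq_mul])
        (by intros; simp [map_add, LinearMap.add_apply])
        (by intros; simp [_root_.map_smul, LinearMap.smul_apply, smul_eq_mul]))
      simp only [LinearMap.mk₂_apply] at hm
      have step2 : (∑ i, ∑ j, ∑ k, ∑ s, ginv i j * ginv k s *
          g (N (J (N (e j) (J (e s)))) (e i)) (e k))
          = ∑ i, ∑ j, ∑ k, ∑ s, ginv i j * ginv k s * g (N (N (e j) (e s)) (e i)) (e k) :=
        scongr4 _ _ fun i j k s => by
          rw [hE (e j) (e s)]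
          simp only [map_neg, hJ2, neg_neg]
      have hpos : (∑ i, ∑ j, ∑ k, ∑ s, ginv i j * ginv k s *
          g (N (J (N (e j) (e s))) (e i)) (J (e k)))
          = ∑ i, ∑ j, ∑ k, ∑ s, ginv i j * ginv k s * g (N (e i) (e k)) (N (e s) (e j)) :=
        (hm.trans step2).trans ht3
      rw [step1]
      simp only [Finset.sum_neg_distrib]
      exact congrArg Neg.neg hpos
    rw [hBp, hCp] at h0
    linarith
  -- expand tauL and split into the three trace terms
  have htau : tauL e ginv P
      = 2*(∑ i, ∑ j, ∑ k, ∑ s, ginv i j * ginv k s * g (Q (e i) (e k)) (Q (e s) (e j)))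
        + ((∑ i, ∑ j, ∑ k, ∑ s, ginv i j * ginv k s * g (Q (e s) (e k)) (Q (e i) (e j)))
        + (∑ i, ∑ j, ∑ k, ∑ s, ginv i j * ginv k s * g (Q (e i) (e s)) (Q (e k) (e j)))) := by
    show (∑ i, ∑ j, ∑ k, ∑ s, ginv i j * ginv k s * P (e i) (e k) (e s) (e j)) = _
    have hptP : ∀ i j k s : ι, ginv i j * ginv k s * P (e i) (e k) (e s) (e j)
        = 2*(ginv i j * ginv k s * g (Q (e i) (e k)) (Q (e s) (e j)))
          + (ginv i j * ginv k s * g (Q (e s) (e k)) (Q (e i) (e j))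
          + ginv i j * ginv k s * g (Q (e i) (e s)) (Q (e k) (e j))) := by
      intro i j k s; rw [hP]; ring
    rw [scongr4 _ _ hptP]
    simp only [Finset.sum_add_distrib, ← Finset.mul_sum]
  have hT3 : (∑ i, ∑ j, ∑ k, ∑ s, ginv i j * ginv k s * g (Q (e i) (e s)) (Q (e k) (e j)))
      = ∑ i, ∑ j, ∑ k, ∑ s, ginv i j * ginv k s * g (Q (e i) (e k)) (Q (e s) (e j)) := by
    rw [sum_swap34 (fun i j k s => ginv i j * ginv k s * g (Q (e i) (e s)) (Q (e k) (e j)))]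
    exact scongr4 _ _ fun i j k s => by rw [hgis s k]
  have hT2 : (∑ i, ∑ j, ∑ k, ∑ s, ginv i j * ginv k s * g (Q (e s) (e k)) (Q (e i) (e j))) = 0 := by
    rw [sum_reindex4 (fun i j k s => ginv i j * ginv k s * g (Q (e s) (e k)) (Q (e i) (e j)))]
    refine Finset.sum_eq_zero fun i _ => Finset.sum_eq_zero fun j _ => ?_
    calc (∑ k, ∑ s, ginv k s * ginv i j * g (Q (e j) (e i)) (Q (e k) (e s)))
        = ∑ k, ∑ s, ginv i j * (ginv k s * g (Q (e j) (e i)) (Q (e k) (e s))) :=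
          Finset.sum_congr rfl fun k _ => Finset.sum_congr rfl fun s _ => by ring
      _ = ginv i j * ∑ k, ∑ s, ginv k s * g (Q (e j) (e i)) (Q (e k) (e s)) := by
          simp only [← Finset.mul_sum]
      _ = 0 := by rw [hwv (Q (e j) (e i)), mul_zero]
  -- the nine-term expansion of g(Q,Q)
  have hQQ : ∀ x y z w : V, g (Q x y) (Q z w) = (1/16) * (
      g (J (N x y)) (J (N z w)) + g (J (N x y)) (N (J z) w) - 2*(g (J (N x y)) (J (N w z)))
      + g (N (J x) y) (J (N z w)) + g (N (J x) y) (N (J z) w) - 2*(g (N (J x) y) (J (N w z)))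
      - 2*(g (J (N y x)) (J (N z w))) - 2*(g (J (N y x)) (N (J z) w))
      + 4*(g (J (N y x)) (J (N w z)))) := by
    intro x y z w
    rw [hq x y, hq z w]
    simp only [_root_.map_smul, map_add, map_sub, map_neg, LinearMap.smul_apply,
      LinearMap.add_apply, LinearMap.sub_apply, LinearMap.neg_apply, smul_eq_mul]
    ring
  have hT1exp : (∑ i, ∑ j, ∑ k, ∑ s, ginv i j * ginv k s * g (Q (e i) (e k)) (Q (e s) (e j)))
      = (1/16)*(∑ i, ∑ j, ∑ k, ∑ s, ginv i j * ginv k s * g (J (N (e i) (e k))) (J (N (e s) (e j))))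
      + (1/16)*(∑ i, ∑ j, ∑ k, ∑ s, ginv i j * ginv k s * g (J (N (e i) (e k))) (N (J (e s)) (e j)))
      + (-1/8)*(∑ i, ∑ j, ∑ k, ∑ s, ginv i j * ginv k s * g (J (N (e i) (e k))) (J (N (e j) (e s))))
      + (1/16)*(∑ i, ∑ j, ∑ k, ∑ s, ginv i j * ginv k s * g (N (J (e i)) (e k)) (J (N (e s) (e j))))
      + (1/16)*(∑ i, ∑ j, ∑ k, ∑ s, ginv i j * ginv k s * g (N (J (e i)) (e k)) (N (J (e s)) (e j)))
      + (-1/8)*(∑ i, ∑ j, ∑ k, ∑ s, ginv i j * ginv k s * g (N (J (e i)) (e k)) (J (N (e j) (e s))))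
      + (-1/8)*(∑ i, ∑ j, ∑ k, ∑ s, ginv i j * ginv k s * g (J (N (e k) (e i))) (J (N (e s) (e j))))
      + (-1/8)*(∑ i, ∑ j, ∑ k, ∑ s, ginv i j * ginv k s * g (J (N (e k) (e i))) (N (J (e s)) (e j)))
      + (1/4)*(∑ i, ∑ j, ∑ k, ∑ s, ginv i j * ginv k s * g (J (N (e k) (e i))) (J (N (e j) (e s)))) := by
    calc (∑ i, ∑ j, ∑ k, ∑ s, ginv i j * ginv k s * g (Q (e i) (e k)) (Q (e s) (e j)))
        = ∑ i, ∑ j, ∑ k, ∑ s,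
            ((1/16)*(ginv i j * ginv k s * g (J (N (e i) (e k))) (J (N (e s) (e j))))
            + (1/16)*(ginv i j * ginv k s * g (J (N (e i) (e k))) (N (J (e s)) (e j)))
            + (-1/8)*(ginv i j * ginv k s * g (J (N (e i) (e k))) (J (N (e j) (e s))))
            + (1/16)*(ginv i j * ginv k s * g (N (J (e i)) (e k)) (J (N (e s) (e j))))
            + (1/16)*(ginv i j * ginv k s * g (N (J (e i)) (e k)) (N (J (e s)) (e j)))
            + (-1/8)*(ginv i j * ginv k s * g (N (J (e i)) (e k)) (J (N (e j) (e s))))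
            + (-1/8)*(ginv i j * ginv k s * g (J (N (e k) (e i))) (J (N (e s) (e j))))
            + (-1/8)*(ginv i j * ginv k s * g (J (N (e k) (e i))) (N (J (e s)) (e j)))
            + (1/4)*(ginv i j * ginv k s * g (J (N (e k) (e i))) (J (N (e j) (e s))))) :=
          scongr4 _ _ fun i j k s => by rw [hQQ]; ring
      _ = _ := by simp only [Finset.sum_add_distrib, ← Finset.mul_sum]
  -- evaluate the nine trace sums
  have hS11 : (∑ i, ∑ j, ∑ k, ∑ s, ginv i j * ginv k s * g (J (N (e i) (e k))) (J (N (e s) (e j))))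
      = -(∑ i, ∑ j, ∑ k, ∑ s, ginv i j * ginv k s * g (N (e i) (e k)) (N (e s) (e j))) := by
    have step : (∑ i, ∑ j, ∑ k, ∑ s, ginv i j * ginv k s * g (J (N (e i) (e k))) (J (N (e s) (e j))))
        = ∑ i, ∑ j, ∑ k, ∑ s, -(ginv i j * ginv k s * g (N (e i) (e k)) (N (e s) (e j))) :=
      scongr4 _ _ fun i j k s => by rw [hJg]; ring
    rw [step]; simp only [Finset.sum_neg_distrib]
  have hS13 : (∑ i, ∑ j, ∑ k, ∑ s, ginv i j * ginv k s * g (J (N (e i) (e k))) (J (N (e j) (e s))))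
      = -(∑ i, ∑ j, ∑ k, ∑ s, ginv i j * ginv k s * g (N (e i) (e k)) (N (e j) (e s))) := by
    have step : (∑ i, ∑ j, ∑ k, ∑ s, ginv i j * ginv k s * g (J (N (e i) (e k))) (J (N (e j) (e s))))
        = ∑ i, ∑ j, ∑ k, ∑ s, -(ginv i j * ginv k s * g (N (e i) (e k)) (N (e j) (e s))) :=
      scongr4 _ _ fun i j k s => by rw [hJg]; ring
    rw [step]; simp only [Finset.sum_neg_distrib]
  have hS31 : (∑ i, ∑ j, ∑ k, ∑ s, ginv i j * ginv k s * g (J (N (e k) (e i))) (J (N (e s) (e j))))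
      = -(∑ i, ∑ j, ∑ k, ∑ s, ginv i j * ginv k s * g (N (e i) (e k)) (N (e j) (e s))) := by
    have step : (∑ i, ∑ j, ∑ k, ∑ s, ginv i j * ginv k s * g (J (N (e k) (e i))) (J (N (e s) (e j))))
        = ∑ i, ∑ j, ∑ k, ∑ s, -(ginv i j * ginv k s * g (N (e k) (e i)) (N (e s) (e j))) :=
      scongr4 _ _ fun i j k s => by rw [hJg]; ring
    rw [step]; simp only [Finset.sum_neg_distrib]
    refine congrArg Neg.neg ?_
    rw [sum_reindex4 (fun i j k s => ginv i j * ginv k s * g (N (e k) (e i)) (N (e s) (e j)))]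
    exact scongr4 _ _ fun i j k s => by ring
  have hS33 : (∑ i, ∑ j, ∑ k, ∑ s, ginv i j * ginv k s * g (J (N (e k) (e i))) (J (N (e j) (e s))))
      = -(∑ i, ∑ j, ∑ k, ∑ s, ginv i j * ginv k s * g (N (e i) (e k)) (N (e s) (e j))) := by
    have step : (∑ i, ∑ j, ∑ k, ∑ s, ginv i j * ginv k s * g (J (N (e k) (e i))) (J (N (e j) (e s))))
        = ∑ i, ∑ j, ∑ k, ∑ s, -(ginv i j * ginv k s * g (N (e k) (e i)) (N (e j) (e s))) :=
      scongr4 _ _ fun i j k s => by rw [hJg]; ring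
    rw [step]; simp only [Finset.sum_neg_distrib]
    refine congrArg Neg.neg ?_
    rw [sum_reindex4 (fun i j k s => ginv i j * ginv k s * g (N (e k) (e i)) (N (e j) (e s)))]
    exact scongr4 _ _ fun i j k s => by ring
  have hS21 : (∑ i, ∑ j, ∑ k, ∑ s, ginv i j * ginv k s * g (N (J (e i)) (e k)) (J (N (e s) (e j))))
      = ∑ i, ∑ j, ∑ k, ∑ s, ginv i j * ginv k s * g (N (e i) (e k)) (N (e s) (e j)) := by
    have hm := moveIJ (fun k s => LinearMap.mk₂ ℝ
      (fun x y => g (N x (e k)) (J (N (e s) y)))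
      (by intros; simp [map_add, LinearMap.add_apply])
      (by intros; simp [_root_.map_smul, LinearMap.smul_apply, smul_eq_mul])
      (by intros; simp [map_add, LinearMap.add_apply])
      (by intros; simp [_root_.map_smul, LinearMap.smul_apply, smul_eq_mul]))
    simp only [LinearMap.mk₂_apply] at hm
    rw [hm]
    exact scongr4 _ _ fun i j k s => by
      rw [hE (e s) (e j)]
      simp only [map_neg, hJ2, neg_neg]
  have hS22 : (∑ i, ∑ j, ∑ k, ∑ s, ginv i j * ginv k s * g (N (J (e i)) (e k)) (N (J (e s)) (e j)))
      = -(∑ i, ∑ j, ∑ k, ∑ s, ginv i j * ginv k s * g (J (N (e i) (e k))) (N (J (e s)) (e j))) := by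
    have hm := moveIJ (fun k s => LinearMap.mk₂ ℝ
      (fun x y => g (N x (e k)) (N (J (e s)) y))
      (by intros; simp [map_add, LinearMap.add_apply])
      (by intros; simp [_root_.map_smul, LinearMap.smul_apply, smul_eq_mul])
      (by intros; simp [map_add, LinearMap.add_apply])
      (by intros; simp [_root_.map_smul, LinearMap.smul_apply, smul_eq_mul]))
    simp only [LinearMap.mk₂_apply] at hm
    rw [hm]
    have step : (∑ i, ∑ j, ∑ k, ∑ s, ginv i j * ginv k s * g (N (e i) (e k)) (N (J (e s)) (J (e j))))
        = ∑ i, ∑ j, ∑ k, ∑ s, -(ginv i j * ginv k s * g (J (N (e i) (e k))) (N (J (e s)) (e j))) :=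
      scongr4 _ _ fun i j k s => by
        rw [hE (J (e s)) (e j), map_neg, ← hJsa]
        ring
    rw [step]; simp only [Finset.sum_neg_distrib]
  have hS32 : (∑ i, ∑ j, ∑ k, ∑ s, ginv i j * ginv k s * g (J (N (e k) (e i))) (N (J (e s)) (e j)))
      = ∑ i, ∑ j, ∑ k, ∑ s, ginv i j * ginv k s * g (N (J (e i)) (e k)) (J (N (e j) (e s))) := by
    have hm := moveKS (fun i j => LinearMap.mk₂ ℝ
      (fun x y => g (J (N x (e i))) (N y (e j)))
      (by intros; simp [map_add, LinearMap.add_apply])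
      (by intros; simp [_root_.map_smul, LinearMap.smul_apply, smul_eq_mul])
      (by intros; simp [map_add, LinearMap.add_apply])
      (by intros; simp [_root_.map_smul, LinearMap.smul_apply, smul_eq_mul]))
    simp only [LinearMap.mk₂_apply] at hm
    rw [← hm]
    have step : (∑ i, ∑ j, ∑ k, ∑ s, ginv i j * ginv k s * g (J (N (J (e k)) (e i))) (N (e s) (e j)))
        = ∑ i, ∑ j, ∑ k, ∑ s, ginv i j * ginv k s * g (N (J (e k)) (e i)) (J (N (e s) (e j))) :=
      scongr4 _ _ fun i j k s => by rw [hJsa]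
    rw [step]
    rw [sum_reindex4 (fun i j k s => ginv i j * ginv k s * g (N (J (e k)) (e i)) (J (N (e s) (e j))))]
    exact scongr4 _ _ fun i j k s => by ring
  -- final assembly
  have hnn : normNablaJ g N e ginv
      = ∑ i, ∑ j, ∑ k, ∑ s, ginv i j * ginv k s * g (N (e i) (e k)) (N (e j) (e s)) := rfl
  rw [hnn]
  linarith [htau, hT2, hT3, hT1exp, hS11, hS13, hS21, hS22, hS31, hS32, hS33, hmn, hp0]
end
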